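/- In the group BS(2,3) = ⟨a, b | b a² b⁻¹ = a³⟩, the element w = [b a b⁻¹, a⁻¹] = (bab⁻¹) a⁻¹ (b a⁻¹ b⁻¹) a is nontrivial, but its image is trivial under every group homomorphism from BS(2,3) to a finite group. In particular, BS(2,3) is not residually finite. -/

import Mathlib

/-- The defining relator of the Baumslag–Solitar group BS(2,3):
`b a² b⁻¹ a⁻³` in the free group on two generators (0 ↦ a, 1 ↦ b). -/
def bsRels : Set (FreeGroup (Fin 2)) :=
  {FreeGroup.of 1 * (FreeGroup.of 0) ^ 2 * (FreeGroup.of 1)⁻¹ * ((FreeGroup.of 0)⁻¹) ^ 3}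

/-- The Baumslag–Solitar group BS(2,3). -/
def BS23 : Type := PresentedGroup bsRels

instance : Group BS23 := by unfold BS23; infer_instance

def bsA : BS23 := PresentedGroup.of 0
def bsB : BS23 := PresentedGroup.of 1

/-! ### Auxiliary setup -/

abbrev MZ := Multiplicative ℤ

def gA : Subgroup MZ := Subgroup.zpowers (Multiplicative.ofAdd 2)
def gB : Subgroup MZ := Subgroup.zpowers (Multiplicative.ofAdd 3)

lemma mem_gA {x : MZ} : x ∈ gA ↔ (2 : ℤ) ∣ x.toAdd := by
  simp only [gA, Subgroup.mem_zpowers_iff]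
  constructor
  · rintro ⟨k, rfl⟩
    exact ⟨k, by simp [mul_comm]⟩
  · rintro ⟨k, hk⟩
    refine ⟨k, ?_⟩
    apply Multiplicative.toAdd.injective
    simp [hk, mul_comm]

lemma mem_gB {x : MZ} : x ∈ gB ↔ (3 : ℤ) ∣ x.toAdd := by
  simp only [gB, Subgroup.mem_zpowers_iff]
  constructor
  · rintro ⟨k, rfl⟩
    exact ⟨k, by simp [mul_comm]⟩
  · rintro ⟨k, hk⟩
    refine ⟨k, ?_⟩
    apply Multiplicative.toAdd.injective
    simp [hk, mul_comm]

def e23 : gA ≃* gB where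
  toFun x := ⟨Multiplicative.ofAdd (3 * (Multiplicative.toAdd x.1 / 2)),
    mem_gB.mpr ⟨_, rfl⟩⟩
  invFun y := ⟨Multiplicative.ofAdd (2 * (Multiplicative.toAdd y.1 / 3)),
    mem_gA.mpr ⟨_, rfl⟩⟩
  left_inv x := by
    obtain ⟨k, hk⟩ := mem_gA.mp x.2
    apply Subtype.ext
    apply Multiplicative.toAdd.injective
    simp only [toAdd_ofAdd]
    omega
  right_inv y := by
    obtain ⟨k, hk⟩ := mem_gB.mp y.2
    apply Subtype.ext
    apply Multiplicative.toAdd.injective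
    simp only [toAdd_ofAdd]
    omega
  map_mul' x y := by
    obtain ⟨k, hk⟩ := mem_gA.mp x.2
    obtain ⟨l, hl⟩ := mem_gA.mp y.2
    apply Subtype.ext
    apply Multiplicative.toAdd.injective
    simp only [MulMemClass.coe_mul, toAdd_mul, toAdd_ofAdd]
    omega

abbrev HN := HNNExtension MZ gA gB e23

def fgen : Fin 2 → HN := ![HNNExtension.of (Multiplicative.ofAdd 1), HNNExtension.t]

lemma relcheck : ∀ r ∈ bsRels, FreeGroup.lift fgen r = 1 := by
  rintro r hr
  simp only [bsRels, Set.mem_singleton_iff] at hr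
  subst hr
  simp only [map_mul, map_pow, map_inv, FreeGroup.lift_apply_of]
  show HNNExtension.t * (HNNExtension.of (Multiplicative.ofAdd 1)) ^ 2 * HNNExtension.t⁻¹ *
    ((HNNExtension.of (Multiplicative.ofAdd (1:ℤ)))⁻¹) ^ 3 = 1
  have h2 : (HNNExtension.of (Multiplicative.ofAdd 1) : HN) ^ 2 =
      HNNExtension.of ((⟨Multiplicative.ofAdd 2, mem_gA.mpr ⟨1, by simp⟩⟩ : gA) : MZ) := by
    rw [← map_pow]
    rfl
  rw [h2, mul_assoc (HNNExtension.t), HNNExtension.of_mul_inv_t, mul_inv_cancel_left]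
  have h3 : ((e23 ⟨Multiplicative.ofAdd 2, mem_gA.mpr ⟨1, by simp⟩⟩ : gB) : MZ) =
      Multiplicative.ofAdd 3 := by
    apply Multiplicative.toAdd.injective
    simp [e23]
  rw [h3, ← map_inv, ← map_pow, ← map_mul]
  have h4 : (Multiplicative.ofAdd (3:ℤ) * ((Multiplicative.ofAdd (1:ℤ))⁻¹) ^ 3) = 1 := by
    apply Multiplicative.toAdd.injective
    simp
  rw [h4, map_one]

def ψ : BS23 →* HN := PresentedGroup.toGroup relcheck

lemma ψ_A : ψ bsA = HNNExtension.of (Multiplicative.ofAdd 1) := by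
  rw [ψ, bsA]; exact PresentedGroup.toGroup.of relcheck

lemma ψ_B : ψ bsB = HNNExtension.t := by
  rw [ψ, bsB]; exact PresentedGroup.toGroup.of relcheck

def rword : HNNExtension.NormalWord.ReducedWord MZ gA gB where
  head := 1
  toList := [(1, Multiplicative.ofAdd 1), (-1, Multiplicative.ofAdd (-1)),
             (1, Multiplicative.ofAdd (-1)), (-1, Multiplicative.ofAdd 1)]
  chain := by
    refine List.isChain_cons_cons.mpr ⟨?_, List.isChain_cons_cons.mpr ⟨?_,
      List.isChain_cons_cons.mpr ⟨?_, List.isChain_singleton _⟩⟩⟩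
    · intro h
      have h' := mem_gA.mp h
      simp only [toAdd_ofAdd] at h'
      omega
    · intro h
      have h' := mem_gB.mp h
      simp only [toAdd_ofAdd] at h'
      omega
    · intro h
      have h' := mem_gA.mp h
      simp only [toAdd_ofAdd] at h'
      omega

lemma rword_prod : rword.prod e23 =
    ψ ((bsB * bsA * bsB⁻¹) * bsA⁻¹ * (bsB * bsA⁻¹ * bsB⁻¹) * bsA) := by
  simp only [map_mul, map_inv, ψ_A, ψ_B]
  simp [HNNExtension.NormalWord.ReducedWord.prod, rword, mul_assoc, ofAdd_neg, map_inv]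

lemma bs_rel : bsB * bsA ^ 2 * bsB⁻¹ * (bsA⁻¹) ^ 3 = 1 := by
  have h : (bsB * bsA ^ 2 * bsB⁻¹ * (bsA⁻¹) ^ 3 : BS23) =
      PresentedGroup.mk bsRels (FreeGroup.of 1 * (FreeGroup.of 0) ^ 2 *
        (FreeGroup.of 1)⁻¹ * ((FreeGroup.of 0)⁻¹) ^ 3) := by
    simp [bsA, bsB, PresentedGroup.of, map_mul, map_pow, map_inv]
    rw [← inv_pow]
    rfl
  rw [h]
  exact (QuotientGroup.eq_one_iff _).mpr (Subgroup.subset_normalClosure rfl)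

theorem stmt_8 :
    (bsB * bsA * bsB⁻¹) * bsA⁻¹ * (bsB * bsA⁻¹ * bsB⁻¹) * bsA ≠ 1 ∧
    ∀ (H : Type) (_ : Group H) (_ : Finite H) (φ : BS23 →* H),
      φ ((bsB * bsA * bsB⁻¹) * bsA⁻¹ * (bsB * bsA⁻¹ * bsB⁻¹) * bsA) = 1 := by
  constructor
  · intro h
    have h1 : rword.prod e23 = 1 := by rw [rword_prod, h, map_one]
    have h2 := HNNExtension.ReducedWord.toList_eq_nil_of_mem_of_range e23 rword
      (by rw [h1]; exact Subgroup.one_mem _)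
    simp [rword] at h2
  · intro H _ _ φ
    set x := φ bsA with hx_def
    set y := φ bsB with hy_def
    have h0 : y * x ^ 2 * y⁻¹ * (x⁻¹) ^ 3 = 1 := by
      have := congrArg φ bs_rel
      simpa [map_mul, map_pow, map_inv] using this
    have hrel : y * x ^ 2 * y⁻¹ = x ^ 3 := by
      rw [inv_pow] at h0
      exact mul_inv_eq_one.mp h0
    have hconj : orderOf (y * x ^ 2 * y⁻¹) = orderOf (x ^ 2) := by
      have := orderOf_injective (MulAut.conj y).toMonoidHom (MulEquiv.injective _) (x ^ 2)
      simpa [MulAut.conj_apply, mul_assoc] using this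
    have hord : orderOf x / Nat.gcd (orderOf x) 2 = orderOf x / Nat.gcd (orderOf x) 3 := by
      rw [← orderOf_pow' x (n := 2) (by norm_num), ← orderOf_pow' x (n := 3) (by norm_num),
        ← hrel, hconj]
    have hpos : 0 < orderOf x := orderOf_pos x
    have hodd : ¬ 2 ∣ orderOf x := by
      intro h2
      have hg2 : Nat.gcd (orderOf x) 2 = 2 := by
        rw [Nat.gcd_comm]; exact Nat.gcd_eq_left h2
      have hg3 := Nat.gcd_dvd_right (orderOf x) 3
      have hg3' := Nat.gcd_dvd_left (orderOf x) 3
      have e3 : Nat.gcd (orderOf x) 3 * (orderOf x / Nat.gcd (orderOf x) 3) = orderOf x :=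
        Nat.mul_div_cancel' hg3'
      have hcase : Nat.gcd (orderOf x) 3 = 1 ∨ Nat.gcd (orderOf x) 3 = 3 :=
        (Nat.dvd_prime Nat.prime_three).mp hg3
      rcases hcase with hc | hc <;> rw [hc] at hord e3 <;> rw [hg2] at hord <;> omega
    set m := (orderOf x + 1) / 2 with hm_def
    have hm : 2 * m = orderOf x + 1 := by omega
    have hx : x ^ (2 * m) = x := by
      rw [hm, pow_succ, pow_orderOf_eq_one, one_mul]
    have hkey : y * x * y⁻¹ = x ^ (3 * m) := by
      conv_lhs => rw [← hx]
      calc y * x ^ (2 * m) * y⁻¹ = y * (x ^ 2) ^ m * y⁻¹ := by rw [pow_mul]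
        _ = (y * x ^ 2 * y⁻¹) ^ m := by rw [conj_pow]
        _ = (x ^ 3) ^ m := by rw [hrel]
        _ = x ^ (3 * m) := by rw [pow_mul]
    have hkey' : y * x⁻¹ * y⁻¹ = (x ^ (3 * m))⁻¹ := by
      rw [← hkey]; group
    simp only [map_mul, map_inv, ← hx_def, ← hy_def]
    rw [hkey, hkey']
    have c : Commute (x ^ (3 * m)) x⁻¹ := ((Commute.refl x).pow_left _).inv_right
    calc x ^ (3 * m) * x⁻¹ * (x ^ (3 * m))⁻¹ * x
        = x⁻¹ * x ^ (3 * m) * (x ^ (3 * m))⁻¹ * x := by rw [c.eq]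
      _ = 1 := by group
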